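/- Let p be a prime, let α, β ∈ ℤ_p be p-adic integers not both natural numbers, and let a, b ∈ ℤ_p be distinct p-adic units (‖a‖_p = ‖b‖_p = 1, a ≠ b). Define c_m := Σ_{r+s=m} a^r b^s C(α,r) C(β,s) ∈ ℤ_p. Then the sequence (c_m) does NOT tend to 0 in ℤ_p as m → ∞. (The c_m are the coefficients of the power series (1+ax)^α (1+bx)^β.) -/

import Mathlib

/-- The generalized binomial coefficient `C(γ, m) = γ(γ-1)⋯(γ-m+1)/m!` for `γ ∈ ℚ_p`. -/
noncomputable def pChoose (p : ℕ) [Fact p.Prime] (γ : ℚ_[p]) (m : ℕ) : ℚ_[p] :=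
  (descPochhammer ℚ_[p] m).eval γ / (m.factorial : ℚ_[p])

namespace Stmt12Aux

open Filter Finset

variable {p : ℕ} [Fact p.Prime]

lemma norm_descPochhammer_le (m : ℕ) (x : ℤ_[p]) :
    ‖(descPochhammer ℤ_[p] m).eval x‖ ≤ ‖(m.factorial : ℤ_[p])‖ := by
  let f := (descPochhammer ℤ_[p] m).eval
  change ‖f x‖ ≤ ‖_‖
  have hC : (m.factorial : ℤ_[p]) ≠ 0 := Nat.cast_ne_zero.mpr m.factorial_ne_zero
  have hf : ContinuousAt f x := Polynomial.continuousAt _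
  obtain ⟨n, hn⟩ : ∃ n : ℕ, ‖f x - f n‖ ≤ ‖(m.factorial : ℤ_[p])‖ := by
    obtain ⟨δ, hδp, hδ⟩ := Metric.continuousAt_iff.mp hf _ (norm_pos_iff.mpr hC)
    obtain ⟨n, hn'⟩ := PadicInt.denseRange_natCast.exists_dist_lt x hδp
    simpa only [← dist_eq_norm_sub'] using ⟨n, (hδ (dist_comm x n ▸ hn')).le⟩
  refine sub_add_cancel (f x) _ ▸ (IsUltrametricDist.norm_add_le_max _ (f n)).trans (max_le hn ?_)
  have : f (n : ℤ_[p]) = (n.descFactorial m : ℤ_[p]) := by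
    simpa [f] using descPochhammer_eval_eq_descFactorial ℤ_[p] n m
  rw [this, Nat.descFactorial_eq_factorial_mul_choose, Nat.cast_mul, norm_mul]
  exact mul_le_of_le_one_right (norm_nonneg _) (PadicInt.norm_le_one _)

lemma pChoose_coe_norm_le (x : ℤ_[p]) (m : ℕ) : ‖pChoose p (x : ℚ_[p]) m‖ ≤ 1 := by
  have key : (descPochhammer ℚ_[p] m).eval (x : ℚ_[p])
      = (((descPochhammer ℤ_[p] m).eval x : ℤ_[p]) : ℚ_[p]) := by
    rw [← descPochhammer_map (PadicInt.Coe.ringHom (p := p)) m, Polynomial.eval_map,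
      show ((x : ℚ_[p])) = PadicInt.Coe.ringHom (p := p) x from rfl,
      Polynomial.eval₂_at_apply]
    rfl
  have hC : ((m.factorial : ℚ_[p])) ≠ 0 := Nat.cast_ne_zero.mpr m.factorial_ne_zero
  rw [pChoose, key, norm_div, div_le_one (norm_pos_iff.mpr hC)]
  · have := norm_descPochhammer_le m x
    rw [PadicInt.norm_def, PadicInt.norm_def] at this
    simpa using this


/-- shift of a sequence: coefficients of `x * F`. -/
noncomputable def sh (g : ℕ → ℚ_[p]) : ℕ → ℚ_[p]
  | 0 => 0
  | (n+1) => g n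

/-- `k`-th Hasse-derivative-style sum at `x₀`. -/
noncomputable def D (x₀ : ℚ_[p]) (g : ℕ → ℚ_[p]) (k : ℕ) : ℚ_[p] :=
  ∑' m : ℕ, ((m + k).choose k : ℚ_[p]) * g (m + k) * x₀ ^ m

lemma norm_nat_le_one (n : ℕ) : ‖(n : ℚ_[p])‖ ≤ 1 := by
  exact_mod_cast Padic.norm_int_le_one (n : ℤ)

lemma tendsto_of_norm_le {f g : ℕ → ℚ_[p]} (h : ∀ n, ‖f n‖ ≤ ‖g n‖)
    (hg : Tendsto g atTop (nhds 0)) : Tendsto f atTop (nhds 0) := by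
  rw [tendsto_zero_iff_norm_tendsto_zero] at hg ⊢
  exact squeeze_zero (fun n => norm_nonneg _) h hg

variable {x₀ : ℚ_[p]} (hx : ‖x₀‖ ≤ 1) {g h w : ℕ → ℚ_[p]}
variable (hg : Tendsto g atTop (nhds 0))

section

include hx hg

lemma D_summable' (c : ℕ → ℕ) (k : ℕ) :
    Summable (fun m : ℕ => ((c m : ℚ_[p])) * g (m + k) * x₀ ^ m) := by
  apply NonarchimedeanAddGroup.summable_of_tendsto_cofinite_zero
  rw [Nat.cofinite_eq_atTop]
  apply tendsto_of_norm_le (g := fun m => g (m + k))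
  · intro m
    calc ‖((c m : ℚ_[p])) * g (m + k) * x₀ ^ m‖
        = ‖(c m : ℚ_[p])‖ * ‖g (m + k)‖ * ‖x₀‖ ^ m := by rw [norm_mul, norm_mul, norm_pow]
      _ ≤ 1 * ‖g (m + k)‖ * 1 := by
          refine mul_le_mul (mul_le_mul (norm_nat_le_one _) le_rfl (norm_nonneg _) zero_le_one)
            (pow_le_one₀ (norm_nonneg _) hx) (by positivity) (by positivity)
      _ = ‖g (m + k)‖ := by ring
  · exact hg.comp (tendsto_add_atTop_nat k)

lemma D_summable (k : ℕ) :
    Summable (fun m : ℕ => (((m + k).choose k : ℚ_[p])) * g (m + k) * x₀ ^ m) :=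
  D_summable' hx hg (fun m => (m + k).choose k) k

end

section blocks

include hx hg

omit hx in
lemma tendsto_sh : Tendsto (sh g) atTop (nhds 0) := by
  rw [← tendsto_add_atTop_iff_nat 1]
  exact hg

lemma B1 (k : ℕ) :
    D x₀ (fun n => ((n : ℚ_[p]) + 1) * g (n + 1)) k = ((k : ℚ_[p]) + 1) * D x₀ g (k + 1) := by
  rw [D, D, ← tsum_mul_left]
  refine tsum_congr fun m => ?_
  have hnat : (m + k + 1) * ((m + k).choose k) = ((m + k + 1).choose (k + 1)) * (k + 1) := by
    simpa [Nat.succ_eq_add_one] using Nat.add_one_mul_choose_eq (m + k) k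
  have hcast := congrArg (Nat.cast : ℕ → ℚ_[p]) hnat
  push_cast at hcast
  show ((m + k).choose k : ℚ_[p]) * ((((m + k : ℕ) : ℚ_[p]) + 1) * g ((m + k) + 1)) * x₀ ^ m
      = ((k : ℚ_[p]) + 1) * (((m + (k + 1)).choose (k + 1) : ℚ_[p]) * g (m + (k + 1)) * x₀ ^ m)
  have e : m + (k + 1) = m + k + 1 := by ring
  rw [e]
  push_cast
  linear_combination (g (m + k + 1) * x₀ ^ m) * hcast

lemma Baux (k : ℕ) :
    ∑' m : ℕ, ((m + k).choose (k + 1) : ℚ_[p]) * g (m + k) * x₀ ^ m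
      = x₀ * D x₀ g (k + 1) := by
  rw [Summable.tsum_eq_zero_add (D_summable' hx hg (fun m => (m + k).choose (k + 1)) k)]
  have h0 : (((0 : ℕ) + k).choose (k + 1) : ℚ_[p]) = 0 := by
    norm_cast
    simp [Nat.choose_eq_zero_of_lt]
  rw [h0, zero_mul, zero_mul, zero_add, D, ← tsum_mul_left]
  refine tsum_congr fun m => ?_
  have e : m + 1 + k = m + (k + 1) := by ring
  rw [e, pow_succ]
  ring

lemma B2a : D x₀ (sh g) 0 = x₀ * D x₀ g 0 := by
  rw [D, Summable.tsum_eq_zero_add (D_summable' hx (tendsto_sh hg) (fun m => (m + 0).choose 0) 0)]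
  simp only [Nat.add_zero, Nat.choose_zero_right, Nat.cast_one, one_mul]
  rw [show sh g 0 * x₀ ^ 0 = 0 from by simp [sh], zero_add, D, ← tsum_mul_left]
  refine tsum_congr fun m => ?_
  simp only [Nat.add_zero, Nat.choose_zero_right, Nat.cast_one, one_mul]
  show g m * x₀ ^ (m + 1) = x₀ * (g m * x₀ ^ m)
  rw [pow_succ]; ring

lemma B2b (k : ℕ) :
    D x₀ (sh g) (k + 1) = x₀ * D x₀ g (k + 1) + D x₀ g k := by
  have key : ∀ m : ℕ, (((m + (k + 1)).choose (k + 1) : ℚ_[p])) * sh g (m + (k + 1)) * x₀ ^ m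
      = ((m + k).choose k : ℚ_[p]) * g (m + k) * x₀ ^ m
        + ((m + k).choose (k + 1) : ℚ_[p]) * g (m + k) * x₀ ^ m := by
    intro m
    have : (m + (k + 1)).choose (k + 1) = (m + k).choose k + (m + k).choose (k + 1) :=
      Nat.choose_succ_succ (m + k) k
    rw [show sh g (m + (k + 1)) = g (m + k) from rfl, this]
    push_cast
    ring
  rw [D, tsum_congr key, Summable.tsum_add (D_summable hx hg k)
    (D_summable' hx hg (fun m => (m + k).choose (k + 1)) k), Baux hx hg k]
  rw [add_comm]
  rfl

lemma B3 (k : ℕ) :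
    D x₀ (fun n => (n : ℚ_[p]) * g n) k
      = (k : ℚ_[p]) * D x₀ g k + ((k : ℚ_[p]) + 1) * (x₀ * D x₀ g (k + 1)) := by
  have key : ∀ m : ℕ, (((m + k).choose k : ℚ_[p])) * (((m + k : ℕ) : ℚ_[p]) * g (m + k)) * x₀ ^ m
      = (k : ℚ_[p]) * (((m + k).choose k : ℚ_[p]) * g (m + k) * x₀ ^ m)
        + ((k : ℚ_[p]) + 1) * (((m + k).choose (k + 1) : ℚ_[p]) * g (m + k) * x₀ ^ m) := by
    intro m
    have h1 : (m + k).choose (k + 1) * (k + 1) = (m + k).choose k * m := by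
      simpa using Nat.choose_succ_right_eq (m + k) k
    have hcast := congrArg (Nat.cast : ℕ → ℚ_[p]) h1
    push_cast at hcast
    push_cast
    linear_combination (-(g (m + k) * x₀ ^ m)) * hcast
  rw [D, tsum_congr key, Summable.tsum_add ((D_summable hx hg k).mul_left _)
    ((D_summable' hx hg (fun m => (m + k).choose (k + 1)) k).mul_left _),
    tsum_mul_left, tsum_mul_left, Baux hx hg k]
  rfl

end blocks

lemma Lcomb {f g h : ℕ → ℚ_[p]} (hf : Tendsto f atTop (nhds 0))
    (hgg : Tendsto g atTop (nhds 0)) (hh : Tendsto h atTop (nhds 0)) (t s : ℚ_[p]) (k : ℕ)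
    (hx : ‖x₀‖ ≤ 1) :
    D x₀ (fun n => f n + t * g n + s * h n) k
      = D x₀ f k + t * D x₀ g k + s * D x₀ h k := by
  have S1 := D_summable hx hf k
  have S2 := (D_summable hx hgg k).mul_left t
  have S3 := (D_summable hx hh k).mul_left s
  have key : ∀ m : ℕ, (((m + k).choose k : ℚ_[p])) * (f (m + k) + t * g (m + k) + s * h (m + k))
        * x₀ ^ m
      = ((m + k).choose k : ℚ_[p]) * f (m + k) * x₀ ^ m
        + (t * (((m + k).choose k : ℚ_[p]) * g (m + k) * x₀ ^ m)
          + s * (((m + k).choose k : ℚ_[p]) * h (m + k) * x₀ ^ m)) := fun m => by ring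
  rw [D, tsum_congr key, Summable.tsum_add S1 (S2.add S3), Summable.tsum_add S2 S3, tsum_mul_left, tsum_mul_left]
  rw [← add_assoc]
  rfl

lemma Lcomb2 {f g : ℕ → ℚ_[p]} (hf : Tendsto f atTop (nhds 0))
    (hgg : Tendsto g atTop (nhds 0)) (t s : ℚ_[p]) (k : ℕ) (hx : ‖x₀‖ ≤ 1) :
    D x₀ (fun n => t * f n + s * g n) k = t * D x₀ f k + s * D x₀ g k := by
  have S1 := (D_summable hx hf k).mul_left t
  have S2 := (D_summable hx hgg k).mul_left s
  have key : ∀ m : ℕ, (((m + k).choose k : ℚ_[p])) * (t * f (m + k) + s * g (m + k)) * x₀ ^ m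
      = t * (((m + k).choose k : ℚ_[p]) * f (m + k) * x₀ ^ m)
        + s * (((m + k).choose k : ℚ_[p]) * g (m + k) * x₀ ^ m) := fun m => by ring
  rw [D, tsum_congr key, Summable.tsum_add S1 S2, tsum_mul_left, tsum_mul_left]
  rfl

lemma pChoose_zero (γ : ℚ_[p]) : pChoose p γ 0 = 1 := by
  simp [pChoose]

lemma pChoose_succ (γ : ℚ_[p]) (m : ℕ) :
    ((m : ℚ_[p]) + 1) * pChoose p γ (m + 1) = (γ - m) * pChoose p γ m := by
  have hm : ((m.factorial : ℚ_[p])) ≠ 0 := Nat.cast_ne_zero.mpr m.factorial_ne_zero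
  have hm1 : ((m : ℚ_[p]) + 1) ≠ 0 := by
    have : ((m + 1 : ℕ) : ℚ_[p]) ≠ 0 := Nat.cast_ne_zero.mpr (Nat.succ_ne_zero m)
    push_cast at this; exact this
  rw [pChoose, pChoose, descPochhammer_succ_eval, Nat.factorial_succ]
  push_cast
  field_simp

noncomputable def Aseq (a γ : ℚ_[p]) (r : ℕ) : ℚ_[p] := a ^ r * pChoose p γ r

noncomputable def cseq (a b γ δ : ℚ_[p]) (n : ℕ) : ℚ_[p] :=
  ∑ r ∈ range (n + 1), Aseq a γ r * Aseq b δ (n - r)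

noncomputable def Wseq (a b γ δ : ℚ_[p]) (n : ℕ) : ℚ_[p] :=
  ∑ r ∈ range (n + 1), (r : ℚ_[p]) * (Aseq a γ r * Aseq b δ (n - r))

variable (a b γ δ : ℚ_[p])

lemma hA (r : ℕ) : ((r : ℚ_[p]) + 1) * Aseq a γ (r + 1) = a * (γ - r) * Aseq a γ r := by
  rw [Aseq, Aseq, pow_succ]
  linear_combination (a ^ r * a) * pChoose_succ γ r

lemma star2 (n : ℕ) :
    Wseq a b γ δ (n + 1) = a * γ * cseq a b γ δ n - a * Wseq a b γ δ n := by
  rw [Wseq, Finset.sum_range_succ']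
  simp only [Nat.cast_zero, zero_mul, add_zero]
  rw [cseq, Wseq, Finset.mul_sum, Finset.mul_sum, ← Finset.sum_sub_distrib]
  refine Finset.sum_congr rfl fun r hr => ?_
  rw [Nat.succ_sub_succ]
  have h := hA a γ r
  push_cast
  linear_combination (Aseq b δ (n - r)) * h

lemma Tcalc (n : ℕ) :
    ∑ r ∈ range (n + 1 + 1), ((n + 1 - r : ℕ) : ℚ_[p]) * (Aseq a γ r * Aseq b δ (n + 1 - r))
      = b * δ * cseq a b γ δ n
        - b * ((n : ℚ_[p]) * cseq a b γ δ n - Wseq a b γ δ n) := by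
  rw [Finset.sum_range_succ]
  simp only [Nat.sub_self, Nat.cast_zero, zero_mul, add_zero]
  rw [cseq, Wseq]
  simp only [Finset.mul_sum, ← Finset.sum_sub_distrib]
  refine Finset.sum_congr rfl fun r hr => ?_
  have hr' : r ≤ n := by
    have := Finset.mem_range.mp hr; omega
  have h1 : n + 1 - r = (n - r) + 1 := by omega
  have h2 : ((n - r : ℕ) : ℚ_[p]) = (n : ℚ_[p]) - r := by
    push_cast [Nat.cast_sub hr']; ring
  rw [h1]
  have h := hA b δ (n - r)
  rw [h2] at h
  push_cast [h2]
  linear_combination (Aseq a γ r) * h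

lemma star1 (n : ℕ) :
    ((n : ℚ_[p]) + 1) * cseq a b γ δ (n + 1)
      = (a * γ + b * δ) * cseq a b γ δ n - (a - b) * Wseq a b γ δ n
        - b * (n : ℚ_[p]) * cseq a b γ δ n := by
  have hsplit : ((n : ℚ_[p]) + 1) * cseq a b γ δ (n + 1)
      = Wseq a b γ δ (n + 1)
        + ∑ r ∈ range (n + 1 + 1), ((n + 1 - r : ℕ) : ℚ_[p])
            * (Aseq a γ r * Aseq b δ (n + 1 - r)) := by
    rw [cseq, Wseq, Finset.mul_sum, ← Finset.sum_add_distrib]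
    refine Finset.sum_congr rfl fun r hr => ?_
    have hr' : r ≤ n + 1 := by
      have := Finset.mem_range.mp hr; omega
    have h2 : ((n + 1 - r : ℕ) : ℚ_[p]) = ((n : ℚ_[p]) + 1) - r := by
      push_cast [Nat.cast_sub hr']; ring
    rw [h2]; ring
  rw [hsplit, star2, Tcalc]
  ring

lemma rec0 : cseq a b γ δ 1 = (a * γ + b * δ) * cseq a b γ δ 0 := by
  have h := star1 a b γ δ 0
  have hW : Wseq a b γ δ 0 = 0 := by simp [Wseq]
  rw [hW] at h
  push_cast at h
  linear_combination h

lemma recs (n : ℕ) :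
    ((n : ℚ_[p]) + 2) * cseq a b γ δ (n + 2)
      = (a * γ + b * δ - (a + b) * ((n : ℚ_[p]) + 1)) * cseq a b γ δ (n + 1)
        + a * b * (γ + δ - n) * cseq a b γ δ n := by
  have h1 := star1 a b γ δ (n + 1)
  have h2 := star2 a b γ δ n
  have h3 := star1 a b γ δ n
  push_cast at h1 h2 h3 ⊢
  linear_combination h1 - (a - b) * h2 + a * h3

section key

variable {p : ℕ} [Fact p.Prime]

lemma term_norm_le {x₀ : ℚ_[p]} (hx : ‖x₀‖ ≤ 1) (N : ℕ) (z : ℚ_[p]) (m : ℕ) :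
    ‖(N : ℚ_[p]) * z * x₀ ^ m‖ ≤ ‖z‖ := by
  calc ‖(N : ℚ_[p]) * z * x₀ ^ m‖ = ‖(N : ℚ_[p])‖ * ‖z‖ * ‖x₀‖ ^ m := by
        rw [norm_mul, norm_mul, norm_pow]
    _ ≤ 1 * ‖z‖ * 1 :=
        mul_le_mul (mul_le_mul (norm_nat_le_one _) le_rfl (norm_nonneg _) zero_le_one)
          (pow_le_one₀ (norm_nonneg _) hx) (by positivity) (by positivity)
    _ = ‖z‖ := by ring

lemma key' (aQ bQ γ δ : ℚ_[p]) (hab : aQ ≠ bQ) (hanorm : ‖aQ‖ = 1)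
    (hγ : ∀ n : ℕ, (n : ℚ_[p]) ≠ γ)
    (hcle : ∀ n, ‖cseq aQ bQ γ δ n‖ ≤ 1)
    (H : Tendsto (cseq aQ bQ γ δ) atTop (nhds 0)) : False := by
  set c : ℕ → ℚ_[p] := cseq aQ bQ γ δ with hcdef
  have haQ : aQ ≠ 0 := by
    intro h; rw [h, norm_zero] at hanorm; norm_num at hanorm
  have hane : aQ - bQ ≠ 0 := sub_ne_zero.mpr hab
  set x₀ : ℚ_[p] := -aQ⁻¹ with hx₀
  have hx : ‖x₀‖ ≤ 1 := by
    rw [hx₀, norm_neg, norm_inv, hanorm]; norm_num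
  have hx₀a : aQ * x₀ = -1 := by rw [hx₀]; field_simp
  set F' : ℕ → ℚ_[p] := fun n => ((n : ℚ_[p]) + 1) * c (n + 1) with hF'def
  set G1 : ℕ → ℚ_[p] := fun n => (n : ℚ_[p]) * c n with hG1def
  have hcs : Tendsto (fun n => c (n + 1)) atTop (nhds 0) := H.comp (tendsto_add_atTop_nat 1)
  have hF' : Tendsto F' atTop (nhds 0) := by
    refine tendsto_of_norm_le (fun n => ?_) hcs
    have h1 : F' n = ((n + 1 : ℕ) : ℚ_[p]) * c (n + 1) * x₀ ^ 0 := by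
      rw [hF'def]; push_cast; ring
    rw [h1]; exact term_norm_le hx _ _ _
  have hG1 : Tendsto G1 atTop (nhds 0) := by
    refine tendsto_of_norm_le (fun n => ?_) H
    have h1 : G1 n = ((n : ℕ) : ℚ_[p]) * c n * x₀ ^ 0 := by
      rw [hG1def]; push_cast; ring
    rw [h1]; exact term_norm_le hx _ _ _
  -- the ODE, coefficientwise
  have hE : ∀ n, F' n + (aQ + bQ) * G1 n + (aQ * bQ) * sh G1 n
      = (aQ * γ + bQ * δ) * c n + (aQ * bQ * (γ + δ)) * sh c n := by
    intro n
    match n with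
    | 0 =>
      have h := rec0 aQ bQ γ δ
      show F' 0 + (aQ + bQ) * G1 0 + (aQ * bQ) * 0
          = (aQ * γ + bQ * δ) * c 0 + (aQ * bQ * (γ + δ)) * 0
      rw [hF'def, hG1def]
      push_cast
      linear_combination h
    | 1 =>
      have h := recs aQ bQ γ δ 0
      show F' 1 + (aQ + bQ) * G1 1 + (aQ * bQ) * G1 0
          = (aQ * γ + bQ * δ) * c 1 + (aQ * bQ * (γ + δ)) * c 0
      rw [hF'def, hG1def]
      push_cast at h ⊢
      linear_combination h
    | (m + 2) =>
      have h := recs aQ bQ γ δ (m + 1)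
      show F' (m + 2) + (aQ + bQ) * G1 (m + 2) + (aQ * bQ) * G1 (m + 1)
          = (aQ * γ + bQ * δ) * c (m + 2) + (aQ * bQ * (γ + δ)) * c (m + 1)
      rw [hF'def, hG1def]
      push_cast at h ⊢
      linear_combination h
  have hDeq : ∀ k, D x₀ F' k + (aQ + bQ) * D x₀ G1 k + (aQ * bQ) * D x₀ (sh G1) k
      = (aQ * γ + bQ * δ) * D x₀ c k + (aQ * bQ * (γ + δ)) * D x₀ (sh c) k := by
    intro k
    have h1 : D x₀ (fun n => F' n + (aQ + bQ) * G1 n + (aQ * bQ) * sh G1 n) k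
        = D x₀ (fun n => (aQ * γ + bQ * δ) * c n + (aQ * bQ * (γ + δ)) * sh c n) k :=
      tsum_congr fun m => by
        show ((m + k).choose k : ℚ_[p]) * (F' (m + k) + (aQ + bQ) * G1 (m + k)
            + (aQ * bQ) * sh G1 (m + k)) * x₀ ^ m = _
        rw [hE (m + k)]
    rwa [Lcomb hF' hG1 (tendsto_sh hG1) _ _ k hx, Lcomb2 H (tendsto_sh H) _ _ k hx] at h1
  have hDF' : ∀ k, D x₀ F' k = ((k : ℚ_[p]) + 1) * D x₀ c (k + 1) := by
    intro k; rw [hF'def]; exact B1 hx H k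
  have hDG1 : ∀ k, D x₀ G1 k
      = (k : ℚ_[p]) * D x₀ c k + ((k : ℚ_[p]) + 1) * (x₀ * D x₀ c (k + 1)) := by
    intro k; rw [hG1def]; exact B3 hx H k
  -- all Hasse coefficients vanish
  have hez : ∀ k, D x₀ c k = 0 := by
    intro k
    induction k with
    | zero =>
      have h := hDeq 0
      rw [hDF' 0, B2a hx hG1, B2a hx H, hDG1 0] at h
      have hγ0 : γ ≠ 0 := fun hh => hγ 0 (by rw [hh]; norm_num)
      have hkey : aQ ^ 2 * ((aQ - bQ) * (γ * D x₀ c 0)) = 0 := by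
        push_cast at h
        linear_combination (-(aQ ^ 2)) * h
          + (aQ ^ 2 * D x₀ c 1 + aQ ^ 2 * bQ * x₀ * D x₀ c 1
              - aQ ^ 2 * bQ * (γ + δ) * D x₀ c 0) * hx₀a
      rcases mul_eq_zero.mp hkey with h' | h'
      · exact absurd h' (pow_ne_zero 2 haQ)
      rcases mul_eq_zero.mp h' with h'' | h''
      · exact absurd h'' hane
      rcases mul_eq_zero.mp h'' with h3 | h3
      · exact absurd h3 hγ0
      · exact h3
    | succ k ih =>
      have h := hDeq (k + 1)
      rw [hDF' (k + 1), B2b hx hG1 k, B2b hx H k, hDG1 (k + 1), hDG1 k, ih] at h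
      have hγk : ((k : ℚ_[p]) + 1) - γ ≠ 0 := by
        intro hh
        refine hγ (k + 1) ?_
        push_cast
        linear_combination hh
      have hkey : aQ ^ 2 * ((aQ - bQ) * ((((k : ℚ_[p]) + 1) - γ) * D x₀ c (k + 1))) = 0 := by
        push_cast at h
        linear_combination (aQ ^ 2) * h
          + (-(aQ ^ 2) * ((k : ℚ_[p]) + 2) * D x₀ c (k + 1 + 1)
              - aQ ^ 2 * bQ * x₀ * ((k : ℚ_[p]) + 2) * D x₀ c (k + 1 + 1)
              - 2 * aQ ^ 2 * bQ * ((k : ℚ_[p]) + 1) * D x₀ c (k + 1)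
              + aQ ^ 2 * bQ * (γ + δ) * D x₀ c (k + 1)) * hx₀a
      rcases mul_eq_zero.mp hkey with h' | h'
      · exact absurd h' (pow_ne_zero 2 haQ)
      rcases mul_eq_zero.mp h' with h'' | h''
      · exact absurd h'' hane
      rcases mul_eq_zero.mp h'' with h3 | h3
      · exact absurd h3 hγk
      · exact h3
  -- endgame
  have hbdd : ∀ N : ℕ, BddAbove (Set.range fun j : ℕ => ‖c (N + j)‖) := by
    intro N
    refine ⟨1, ?_⟩
    rintro x ⟨j, rfl⟩
    exact hcle _
  set s : ℕ → ℝ := fun N => ⨆ j : ℕ, ‖c (N + j)‖ with hsdef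
  have hs_le : ∀ {N M : ℕ}, N ≤ M → s M ≤ s N := by
    intro N M hNM
    refine ciSup_le fun j => ?_
    have hidx : M + j = N + (M - N + j) := by omega
    rw [hidx]
    exact le_ciSup (hbdd N) _
  have hck : ∀ k, ‖c k‖ ≤ s (k + 1) := by
    intro k
    have hsum := D_summable hx H k
    have h : D x₀ c k = (((0 : ℕ) + k).choose k : ℚ_[p]) * c (0 + k) * x₀ ^ 0
        + ∑' m : ℕ, (((m + 1 + k).choose k : ℚ_[p])) * c (m + 1 + k) * x₀ ^ (m + 1) :=
      Summable.tsum_eq_zero_add hsum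
    rw [hez k] at h
    have h0 : (((0 : ℕ) + k).choose k : ℚ_[p]) * c (0 + k) * x₀ ^ 0 = c k := by simp
    rw [h0] at h
    have hck' : c k
        = - ∑' m : ℕ, (((m + 1 + k).choose k : ℚ_[p])) * c (m + 1 + k) * x₀ ^ (m + 1) := by
      linear_combination -h
    rw [hck', norm_neg]
    refine IsUltrametricDist.norm_tsum_le_of_forall_le_of_nonneg ?_ ?_
    · exact le_trans (norm_nonneg (c (k + 1))) (by simpa using le_ciSup (hbdd (k + 1)) 0)
    · intro m
      refine (term_norm_le hx _ _ _).trans ?_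
      rw [show m + 1 + k = (k + 1) + m by omega]
      exact le_ciSup (hbdd (k + 1)) m
  have hc0 : c 0 = 1 := by
    rw [hcdef]
    simp [cseq, Aseq, pChoose_zero]
  have h1 : (1 : ℝ) ≤ s 1 := by
    have := hck 0
    rwa [hc0, norm_one] at this
  have hmono : ∀ N : ℕ, s 1 ≤ s (N + 1) := by
    intro N
    induction N with
    | zero => exact le_rfl
    | succ n ih =>
      refine ih.trans (ciSup_le fun j => ?_)
      exact (hck (n + 1 + j)).trans (hs_le (by omega))
  obtain ⟨N, hN⟩ := Filter.eventually_atTop.mp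
    (NormedAddCommGroup.tendsto_nhds_zero.mp H (1 / 2) (by norm_num))
  have hsmall : s (N + 1) ≤ 1 / 2 := ciSup_le fun j => (hN (N + 1 + j) (by omega)).le
  linarith [h1, hmono N, hsmall]

end key

lemma Aseq_norm_le (u x : ℤ_[p]) (hu : ‖u‖ = 1) (r : ℕ) :
    ‖Aseq (u : ℚ_[p]) (x : ℚ_[p]) r‖ ≤ 1 := by
  rw [Aseq, norm_mul, norm_pow, ← PadicInt.norm_def, hu, one_pow, one_mul]
  exact pChoose_coe_norm_le x r

lemma cseq_norm_le (u v x y : ℤ_[p]) (hu : ‖u‖ = 1) (hv : ‖v‖ = 1) (n : ℕ) :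
    ‖cseq (u : ℚ_[p]) (v : ℚ_[p]) (x : ℚ_[p]) (y : ℚ_[p]) n‖ ≤ 1 := by
  rw [cseq]
  refine IsUltrametricDist.norm_sum_le_of_forall_le_of_nonneg zero_le_one fun i hi => ?_
  rw [norm_mul]
  exact mul_le_one₀ (Aseq_norm_le u x hu i) (norm_nonneg _) (Aseq_norm_le v y hv _)

lemma cseq_symm (aQ bQ γ δ : ℚ_[p]) (n : ℕ) :
    cseq aQ bQ γ δ n = cseq bQ aQ δ γ n := by
  rw [cseq, cseq, ← Finset.sum_range_reflect]
  refine Finset.sum_congr rfl fun j hj => ?_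
  have hj' : j ≤ n := by
    have := Finset.mem_range.mp hj; omega
  rw [show n + 1 - 1 - j = n - j from by omega, show n - (n - j) = j from by omega]
  ring

lemma not_nat_coe {x : ℤ_[p]} (hx : ¬ ∃ n : ℕ, (n : ℤ_[p]) = x) :
    ∀ n : ℕ, (n : ℚ_[p]) ≠ (x : ℚ_[p]) := by
  intro n hn
  refine hx ⟨n, ?_⟩
  have : ((n : ℤ_[p]) : ℚ_[p]) = (x : ℚ_[p]) := by push_cast; exact hn
  exact Subtype.coe_injective this

end Stmt12Aux

/-- For `α, β ∈ ℤ_p` not both natural numbers and distinct `p`-adic units `a ≠ b`, the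
coefficients `c_m = Σ_{r+s=m} a^r b^s C(α,r) C(β,s)` of `(1+ax)^α (1+bx)^β` do not tend
to `0` in `ℤ_p`. -/
theorem stmt_12 (p : ℕ) [Fact p.Prime] (α β : ℤ_[p])
    (hnat : ¬ ((∃ n : ℕ, (n : ℤ_[p]) = α) ∧ (∃ n : ℕ, (n : ℤ_[p]) = β)))
    (a b : ℤ_[p]) (hab : a ≠ b) (ha : ‖a‖ = 1) (hb : ‖b‖ = 1) :
    ¬ Filter.Tendsto (fun m : ℕ => ∑ r ∈ Finset.range (m + 1),
        (a : ℚ_[p]) ^ r * (b : ℚ_[p]) ^ (m - r) *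
          pChoose p (α : ℚ_[p]) r * pChoose p (β : ℚ_[p]) (m - r))
      Filter.atTop (nhds 0) := by
  intro H
  have habQ : (a : ℚ_[p]) ≠ (b : ℚ_[p]) := fun h => hab (Subtype.coe_injective h)
  have hfun : (fun m : ℕ => ∑ r ∈ Finset.range (m + 1),
      (a : ℚ_[p]) ^ r * (b : ℚ_[p]) ^ (m - r) *
        pChoose p (α : ℚ_[p]) r * pChoose p (β : ℚ_[p]) (m - r))
      = Stmt12Aux.cseq (a : ℚ_[p]) (b : ℚ_[p]) (α : ℚ_[p]) (β : ℚ_[p]) := by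
    funext m
    rw [Stmt12Aux.cseq]
    refine Finset.sum_congr rfl fun r hr => ?_
    rw [Stmt12Aux.Aseq, Stmt12Aux.Aseq]
    ring
  rw [hfun] at H
  by_cases hA : ∃ n : ℕ, (n : ℤ_[p]) = α
  · have hB : ¬ ∃ n : ℕ, (n : ℤ_[p]) = β := fun hB => hnat ⟨hA, hB⟩
    have H' : Filter.Tendsto (Stmt12Aux.cseq (b : ℚ_[p]) (a : ℚ_[p]) (β : ℚ_[p]) (α : ℚ_[p]))
        Filter.atTop (nhds 0) := by
      have : Stmt12Aux.cseq (a : ℚ_[p]) (b : ℚ_[p]) (α : ℚ_[p]) (β : ℚ_[p])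
          = Stmt12Aux.cseq (b : ℚ_[p]) (a : ℚ_[p]) (β : ℚ_[p]) (α : ℚ_[p]) :=
        funext fun n => Stmt12Aux.cseq_symm _ _ _ _ n
      rwa [this] at H
    exact Stmt12Aux.key' (b : ℚ_[p]) (a : ℚ_[p]) (β : ℚ_[p]) (α : ℚ_[p]) habQ.symm
      (by rw [← PadicInt.norm_def]; exact hb) (Stmt12Aux.not_nat_coe hB)
      (Stmt12Aux.cseq_norm_le b a β α hb ha) H'
  · exact Stmt12Aux.key' (a : ℚ_[p]) (b : ℚ_[p]) (α : ℚ_[p]) (β : ℚ_[p]) habQ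
      (by rw [← PadicInt.norm_def]; exact ha) (Stmt12Aux.not_nat_coe hA)
      (Stmt12Aux.cseq_norm_le a b α β ha hb) H
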